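/- Let n ≥ 4 and let X : ℝⁿ → so(n) be a map satisfying X(R·x) = R X(x) R⁻¹ for every R ∈ SO(n) and every x ∈ ℝⁿ. Then X(x) = 0 for every x ∈ ℝⁿ. -/

import Mathlib

open Matrix BigOperators

/-- Key step: `X (c • e₀) = 0`, proved using diagonal sign matrices in SO(n). -/
lemma stmt19_aux (n : ℕ) [NeZero n] (hn : 4 ≤ n)
    (X : (Fin n → ℝ) → Matrix (Fin n) (Fin n) ℝ)
    (hskew : ∀ x, (X x)ᵀ = -(X x))
    (hequiv : ∀ R : Matrix (Fin n) (Fin n) ℝ, Rᵀ * R = 1 → R.det = 1 →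
      ∀ x : Fin n → ℝ, X (R *ᵥ x) = R * X x * R⁻¹)
    (c : ℝ) : X (c • ((Pi.single (0 : Fin n) (1 : ℝ)) : Fin n → ℝ)) = 0 := by
  set v : Fin n → ℝ := c • ((Pi.single (0 : Fin n) (1 : ℝ)) : Fin n → ℝ) with hv
  set A := X v with hA
  ext i j
  rcases eq_or_ne i j with rfl | hij
  · have := congrFun (congrFun (hskew v) i) i
    simp only [Matrix.transpose_apply, Matrix.neg_apply] at this
    have : A i i = 0 := by linarith
    simpa using this
  · set m : Fin n := if i = 0 then j else i with hm
    have hm0 : m ≠ 0 := by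
      rw [hm]; split
      · rename_i h; rw [← h]; exact hij.symm
      · assumption
    obtain ⟨k, hk⟩ : ∃ k : Fin n, k ∉ ({0, i, j} : Finset (Fin n)) := by
      by_contra h
      push_neg at h
      have hsub : (Finset.univ : Finset (Fin n)) ⊆ {0, i, j} := fun a _ => h a
      have h1 := Finset.card_le_card hsub
      simp only [Finset.card_univ, Fintype.card_fin] at h1
      have h3 : ({0, i, j} : Finset (Fin n)).card ≤ 3 := by
        apply le_trans (Finset.card_insert_le _ _)
        have := Finset.card_insert_le i ({j} : Finset (Fin n))
        simp at this ⊢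
        omega
      omega
    simp only [Finset.mem_insert, Finset.mem_singleton, not_or] at hk
    obtain ⟨hk0, hki, hkj⟩ := hk
    have hmk : m ≠ k := by
      rw [hm]; split
      · exact fun h => hkj h.symm
      · exact fun h => hki h.symm
    set ε : Fin n → ℝ := fun a => if a = m ∨ a = k then -1 else 1 with hε
    have hε0 : ε 0 = 1 := by
      simp only [hε]
      rw [if_neg]
      push_neg
      exact ⟨fun h => hm0 h.symm, fun h => hk0 h.symm⟩
    have hsq : ∀ a, ε a * ε a = 1 := by
      intro a; simp only [hε]; split <;> norm_num
    set D : Matrix (Fin n) (Fin n) ℝ := Matrix.diagonal ε with hD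
    have hDsymm : Dᵀ = D := Matrix.diagonal_transpose ε
    have hDD : D * D = 1 := by
      rw [hD, Matrix.diagonal_mul_diagonal,
        show (fun a => ε a * ε a) = fun _ => (1 : ℝ) from funext hsq, Matrix.diagonal_one]
    have hDorth : Dᵀ * D = 1 := by rw [hDsymm]; exact hDD
    have hDdet : D.det = 1 := by
      rw [hD, Matrix.det_diagonal]
      rw [show ∏ a, ε a = ∏ a, (if a ∈ ({m, k} : Finset (Fin n)) then (-1 : ℝ) else 1) by
        refine Finset.prod_congr rfl fun a _ => ?_
        simp [hε, Finset.mem_insert, Finset.mem_singleton]]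
      rw [Finset.prod_ite_mem, Finset.univ_inter, Finset.prod_const]
      rw [Finset.card_insert_of_notMem (by simpa using hmk), Finset.card_singleton]
      norm_num
    have hDinv : D⁻¹ = D := Matrix.inv_eq_right_inv hDD
    have hfix : D *ᵥ v = v := by
      funext a
      rw [hD, Matrix.mulVec_diagonal]
      rcases eq_or_ne a 0 with rfl | ha
      · rw [hε0, one_mul]
      · simp [hv, Pi.single_eq_of_ne ha]
    have key := hequiv D hDorth hDdet v
    rw [hfix, hDinv, ← hA] at key
    have hentry : A i j = ε i * A i j * ε j := by
      conv_lhs => rw [key]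
      rw [hD, Matrix.mul_diagonal, Matrix.diagonal_mul]

    have hsign : ε i * ε j = -1 := by
      rcases eq_or_ne i 0 with rfl | hi0
      · have hεj : ε j = -1 := by
          simp only [hε]
          rw [if_pos]
          left
          rw [hm, if_pos rfl]
        rw [hε0, hεj]; ring
      · have hmi : m = i := by rw [hm, if_neg hi0]
        have hεi : ε i = -1 := by
          simp only [hε]; rw [if_pos (Or.inl hmi.symm)]
        have hεj : ε j = 1 := by
          simp only [hε]
          rw [if_neg]
          push_neg
          refine ⟨?_, fun h => hkj h.symm⟩
          rw [hmi]
          exact hij.symm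
        rw [hεi, hεj]; ring
    have h1 : A i j = - A i j := by
      calc A i j = ε i * A i j * ε j := hentry
      _ = (ε i * ε j) * A i j := by ring
      _ = - A i j := by rw [hsign]; ring
    have : A i j = 0 := by linarith
    simpa using this

theorem stmt19 (n : ℕ) (hn : 4 ≤ n)
    (X : (Fin n → ℝ) → Matrix (Fin n) (Fin n) ℝ)
    (hskew : ∀ x, (X x)ᵀ = -(X x))
    (hequiv : ∀ R : Matrix (Fin n) (Fin n) ℝ, Rᵀ * R = 1 → R.det = 1 →
      ∀ x : Fin n → ℝ, X (R *ᵥ x) = R * X x * R⁻¹) :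
    ∀ x : Fin n → ℝ, X x = 0 := by
  haveI : NeZero n := ⟨by omega⟩
  intro x
  rcases eq_or_ne x 0 with rfl | hx
  · have := stmt19_aux n hn X hskew hequiv 0
    simpa using this
  · set x' : EuclideanSpace ℝ (Fin n) := WithLp.toLp 2 x with hx'
    have hx'0 : x' ≠ 0 := by simpa [hx'] using hx
    set c : ℝ := ‖x'‖ with hc
    have hc0 : c ≠ 0 := norm_ne_zero_iff.mpr hx'0
    set u : EuclideanSpace ℝ (Fin n) := c⁻¹ • x' with hu
    have hu1 : ‖u‖ = 1 := by
      rw [hu, norm_smul, norm_inv, norm_norm, ← hc, inv_mul_cancel₀ hc0]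
    have hcard : Module.finrank ℝ (EuclideanSpace ℝ (Fin n)) = Fintype.card (Fin n) := by
      simp [finrank_euclideanSpace]
    have horth : Orthonormal ℝ (Set.restrict {(0 : Fin n)} (fun _ => u)) := by
      rw [orthonormal_iff_ite]
      intro a b
      have hab : a = b :=
        Subtype.ext ((Set.mem_singleton_iff.mp a.2).trans (Set.mem_singleton_iff.mp b.2).symm)
      subst hab
      simp only [Set.restrict_apply, if_pos rfl]
      erw [show (inner ℝ u u : ℝ) = ‖u‖ ^ 2 from real_inner_self_eq_norm_sq u, hu1]
      norm_num
    obtain ⟨b, hb⟩ := horth.exists_orthonormalBasis_extension_of_card_eq hcard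
    have hb0 : b 0 = u := hb 0 rfl
    set R₀ : Matrix (Fin n) (Fin n) ℝ := Matrix.of (fun a j => b j a) with hR₀
    have hR₀orth : R₀ᵀ * R₀ = 1 := by
      ext j j'
      have h1 := (orthonormal_iff_ite.mp b.orthonormal) j j'
      rw [PiLp.inner_apply] at h1
      simp only [RCLike.inner_apply, conj_trivial] at h1
      rw [Matrix.mul_apply, Matrix.one_apply]
      simpa [hR₀, mul_comm] using h1
    have hdet2 : R₀.det * R₀.det = 1 := by
      have := congrArg Matrix.det hR₀orth
      rwa [Matrix.det_mul, Matrix.det_transpose, Matrix.det_one] at this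
    set d : ℝ := R₀.det with hd
    set D₁ : Matrix (Fin n) (Fin n) ℝ := Matrix.diagonal (fun j => if j = 1 then d else 1)
      with hD₁
    set R : Matrix (Fin n) (Fin n) ℝ := R₀ * D₁ with hRdef
    have hD₁symm : D₁ᵀ = D₁ := Matrix.diagonal_transpose _
    have hD₁sq : D₁ * D₁ = 1 := by
      rw [hD₁, Matrix.diagonal_mul_diagonal]
      rw [show (fun a => (if a = (1 : Fin n) then d else 1) * (if a = (1 : Fin n) then d else 1))
          = fun _ => (1 : ℝ) by
        funext a
        split
        · exact hdet2
        · norm_num]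
      exact Matrix.diagonal_one
    have hRorth : Rᵀ * R = 1 := by
      rw [hRdef, Matrix.transpose_mul, hD₁symm, Matrix.mul_assoc, ← Matrix.mul_assoc R₀ᵀ,
        hR₀orth, Matrix.one_mul, hD₁sq]
    have hRdet : R.det = 1 := by
      rw [hRdef, Matrix.det_mul, hD₁, Matrix.det_diagonal]
      rw [show ∏ j, (if j = (1 : Fin n) then d else 1) = d by
        rw [Finset.prod_ite_eq' Finset.univ (1 : Fin n) (fun _ => d)]
        simp]
      exact hdet2
    have h01 : (0 : Fin n) ≠ (1 : Fin n) := by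
      intro h
      have := congrArg Fin.val h
      simp [Fin.val_zero, Fin.val_one'] at this
      omega
    set w : Fin n → ℝ := c • ((Pi.single (0 : Fin n) (1 : ℝ)) : Fin n → ℝ) with hw
    have hRw : R *ᵥ w = x := by
      have hD₁w : D₁ *ᵥ w = w := by
        funext a
        rw [hD₁, Matrix.mulVec_diagonal]
        rcases eq_or_ne a 0 with rfl | ha
        · rw [if_neg h01, one_mul]
        · simp [hw, Pi.single_eq_of_ne ha]
      rw [hRdef, ← Matrix.mulVec_mulVec, hD₁w]
      funext a
      rw [Matrix.mulVec, dotProduct]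
      simp only [hR₀, Matrix.of_apply, hw]
      rw [Finset.sum_eq_single (0 : Fin n)]
      · have hbu : b 0 a = c⁻¹ * x a := by
          rw [hb0, hu]
          rfl
        simp only [Pi.smul_apply, Pi.single_eq_same, smul_eq_mul, mul_one, hbu]
        field_simp
      · intro j _ hj
        simp [Pi.single_eq_of_ne hj]
      · simp
    have hfin := hequiv R hRorth hRdet w
    rw [hRw] at hfin
    rw [hfin, stmt19_aux n hn X hskew hequiv c]
    simp
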